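/- arXiv:0901.3774 — 2 statements merged into one kernel-verified Lean document; each statement's English description precedes it below -/
import Mathlib

section
/- Let Δ be a connected graph and C a collection of at least two connected subgraphs covering every edge of Δ at least twice. If all triple intersections of members of C are empty, then C has at most two elements. -/
/-- Let Δ be a connected graph and `C` a collection of at least two connected subgraphs
covering every edge of Δ at least twice.  If all triple intersections of members of `C`
are empty, then `C` has at most two elements. -/
theorem stmt1 {V : Type*} (G : SimpleGraph V) (hG : G.Connected)
    (m : ℕ) (hm : 2 ≤ m) (Δ : Fin m → G.Subgraph)
    (hconn : ∀ i, (Δ i).Connected)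
    (hcover : ∀ e ∈ G.edgeSet, ∃ i j : Fin m, i ≠ j ∧ e ∈ (Δ i).edgeSet ∧ e ∈ (Δ j).edgeSet)
    (htriple : ∀ i j k : Fin m, i ≠ j → j ≠ k → i ≠ k →
      (Δ i).verts ∩ (Δ j).verts ∩ (Δ k).verts = ∅) :
    m ≤ 2 := by
  by_contra hlt
  push_neg at hlt
  -- three distinct indices
  set i0 : Fin m := ⟨0, by omega⟩
  set i1 : Fin m := ⟨1, by omega⟩
  set i2 : Fin m := ⟨2, by omega⟩
  have h01 : i0 ≠ i1 := by simp [i0, i1, Fin.ext_iff]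
  have h12 : i1 ≠ i2 := by simp [i1, i2, Fin.ext_iff]
  have h02 : i0 ≠ i2 := by simp [i0, i2, Fin.ext_iff]
  -- the "label set" of a vertex
  set S : V → Set (Fin m) := fun v => {i | v ∈ (Δ i).verts} with hS
  -- adjacent vertices have the same label set
  have hadj : ∀ u v : V, G.Adj u v → S u = S v := by
    intro u v huv
    obtain ⟨i, j, hij, hei, hej⟩ := hcover s(u, v) huv
    rw [SimpleGraph.Subgraph.mem_edgeSet] at hei hej
    have key : ∀ w : V, w ∈ (Δ i).verts → w ∈ (Δ j).verts → S w = {i, j} := by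
      intro w hwi hwj
      ext k
      simp only [hS, Set.mem_setOf_eq, Set.mem_insert_iff, Set.mem_singleton_iff]
      constructor
      · intro hk
        by_contra hkij
        push_neg at hkij
        have := htriple i j k hij (Ne.symm hkij.2) (Ne.symm hkij.1)
        exact absurd this (by
          apply Set.Nonempty.ne_empty
          exact ⟨w, ⟨hwi, hwj⟩, hk⟩)
      · rintro (rfl | rfl)
        · exact hwi
        · exact hwj
    rw [key u hei.fst_mem hej.fst_mem, key v hei.snd_mem hej.snd_mem]
  -- hence S is constant on the connected graph
  have hconst : ∀ u v : V, S u = S v := by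
    intro u v
    obtain ⟨p⟩ := hG.preconnected u v
    induction p with
    | nil => rfl
    | cons h _ ih => exact (hadj _ _ h).trans ih
  -- pick vertices in Δ i0, Δ i1, Δ i2
  obtain ⟨v0, hv0⟩ := (hconn i0).nonempty
  obtain ⟨v1, hv1⟩ := (hconn i1).nonempty
  obtain ⟨v2, hv2⟩ := (hconn i2).nonempty
  have h1 : i1 ∈ S v0 := (hconst v0 v1) ▸ hv1
  have h2 : i2 ∈ S v0 := (hconst v0 v2) ▸ hv2
  have := htriple i0 i1 i2 h01 h12 h02
  exact absurd this (Set.Nonempty.ne_empty ⟨v0, ⟨hv0, h1⟩, h2⟩)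
end

section
/- If G₁ and G₂ are groups with coranks CR(G₁) and CR(G₂), then the corank of the free product G₁ * G₂ equals CR(G₁) + CR(G₂) when both coranks are finite. In particular, the corank of a free group of rank n is n. -/
open Function

/-- The set of ranks of free groups onto which `G` surjects; its supremum is the corank
`CR(G)`. -/
def corankSet (G : Type*) [Group G] : Set ℕ :=
  {n | ∃ f : G →* FreeGroup (Fin n), Function.Surjective f}

lemma lift_surjective_of_closure {α : Type*} {G : Type*} [Group G] (f : α → G)
    (h : Subgroup.closure (Set.range f) = ⊤) : Surjective (FreeGroup.lift f) := by
  rw [← MonoidHom.range_eq_top, FreeGroup.range_lift_eq_closure, h]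

lemma surjective_of_closure_range_le {G H : Type*} [Group G] [Group H] (φ : G →* H)
    (S : Set H) (hS : Subgroup.closure S = ⊤) (h : S ⊆ Set.range φ) : Surjective φ := by
  rw [← MonoidHom.range_eq_top, eq_top_iff, ← hS, Subgroup.closure_le]
  exact h

/-- Abelianization rank bound: a surjection between finitely generated free groups forces the
rank inequality. -/
lemma nat_le_of_freeGroup_surjective {m n : ℕ} (f : FreeGroup (Fin m) →* FreeGroup (Fin n))
    (hf : Surjective f) : n ≤ m := by
  classical
  set π : FreeGroup (Fin n) →* Multiplicative (Fin n → ℤ) :=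
    FreeGroup.lift (fun i => Multiplicative.ofAdd (Pi.single i 1)) with hπ
  set ab : FreeGroup (Fin m) →* Multiplicative (Fin m → ℤ) :=
    FreeGroup.lift (fun i => Multiplicative.ofAdd (Pi.single i 1)) with hab
  set g : (Fin m → ℤ) →ₗ[ℤ] (Fin n → ℤ) :=
    (Pi.basisFun ℤ (Fin m)).constr ℤ
      (fun i => Multiplicative.toAdd (π (f (FreeGroup.of i)))) with hg
  have key : ∀ x, π (f x) = Multiplicative.ofAdd (g (Multiplicative.toAdd (ab x))) := by
    have h2 : π.comp f =
        (AddMonoidHom.toMultiplicative g.toAddMonoidHom).comp ab := by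
      apply FreeGroup.ext_hom
      intro i
      simp only [MonoidHom.comp_apply, hab, FreeGroup.lift_apply_of,
        AddMonoidHom.toMultiplicative_apply_apply, LinearMap.toAddMonoidHom_coe]
      rw [toAdd_ofAdd,
        show (Pi.single i 1 : Fin m → ℤ) = Pi.basisFun ℤ (Fin m) i from
          (Pi.basisFun_apply ℤ (Fin m) i).symm,
        hg, Module.Basis.constr_basis, ofAdd_toAdd]
    intro x
    have := congrArg (fun F => F x) h2
    simpa using this
  have hgsurj : LinearMap.range g = ⊤ := by
    rw [← top_le_iff, ← (Pi.basisFun ℤ (Fin n)).span_eq]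
    refine Submodule.span_le.mpr ?_
    rintro _ ⟨j, rfl⟩
    obtain ⟨w, hw⟩ := hf (FreeGroup.of j)
    refine ⟨Multiplicative.toAdd (ab w), ?_⟩
    have hk := key w
    rw [hw] at hk
    have : π (FreeGroup.of j) = Multiplicative.ofAdd (Pi.single j 1) := FreeGroup.lift_apply_of
    rw [this] at hk
    have := congrArg Multiplicative.toAdd hk
    simp only [toAdd_ofAdd] at this
    rw [Pi.basisFun_apply, ← this]
  have hr := LinearMap.rank_le_of_surjective g (LinearMap.range_eq_top.mp hgsurj)
  rw [rank_fin_fun, rank_fin_fun] at hr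
  exact_mod_cast hr

/-- Free group on an infinite type surjects onto every finite-rank free group. -/
lemma infinite_surj {α : Type*} [Infinite α] (k : ℕ) :
    ∃ f : FreeGroup α →* FreeGroup (Fin k), Surjective f := by
  classical
  let emb : Fin k ↪ α := (Fin.valEmbedding.trans (Infinite.natEmbedding α))
  let g : α → FreeGroup (Fin k) := Function.extend emb FreeGroup.of (fun _ => 1)
  refine ⟨FreeGroup.lift g, ?_⟩
  refine surjective_of_closure_range_le _ (Set.range FreeGroup.of)
    (FreeGroup.closure_range_of _) ?_
  rintro _ ⟨i, rfl⟩
  refine ⟨FreeGroup.of (emb i), ?_⟩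
  simp only [FreeGroup.lift_apply_of, g, emb.injective.extend_apply]

lemma zero_mem_corankSet (G : Type*) [Group G] : 0 ∈ corankSet G := by
  refine ⟨1, fun y => ⟨1, ?_⟩⟩
  have h : (⊤ : Subgroup (FreeGroup (Fin 0))) = ⊥ := by
    rw [← FreeGroup.closure_range_of (Fin 0), Set.range_eq_empty, Subgroup.closure_empty]
  have hy : y ∈ (⊥ : Subgroup (FreeGroup (Fin 0))) := h ▸ Subgroup.mem_top y
  rw [Subgroup.mem_bot.mp hy]
  rfl

/-- If `G` has bounded corank set and surjects onto a free group `H`, then `H` has finite rank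
bounded by the corank of `G`; we extract an isomorphism with a finite-rank free group. -/
lemma fin_rank_of_bdd {G : Type*} [Group G] (h : BddAbove (corankSet G))
    {H : Type*} [Group H] [IsFreeGroup H] (ψ : G →* H) (hψ : Surjective ψ) :
    ∃ r : ℕ, r ≤ sSup (corankSet G) ∧ Nonempty (H ≃* FreeGroup (Fin r)) := by
  classical
  cases finite_or_infinite (IsFreeGroup.Generators H) with
  | inl hfin =>
    have := Fintype.ofFinite (IsFreeGroup.Generators H)
    refine ⟨Fintype.card (IsFreeGroup.Generators H), ?_, ⟨?_⟩⟩
    · refine le_csSup h ?_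
      refine ⟨((FreeGroup.freeGroupCongr (Fintype.equivFin _)).toMonoidHom.comp
        (IsFreeGroup.toFreeGroup H).toMonoidHom).comp ψ, ?_⟩
      exact ((FreeGroup.freeGroupCongr (Fintype.equivFin _)).surjective.comp
        (IsFreeGroup.toFreeGroup H).surjective).comp hψ
    · exact (IsFreeGroup.toFreeGroup H).trans (FreeGroup.freeGroupCongr (Fintype.equivFin _))
  | inr hinf =>
    exfalso
    obtain ⟨c, hc⟩ := h
    obtain ⟨f, hf⟩ := infinite_surj (α := IsFreeGroup.Generators H) (c + 1)
    have : c + 1 ∈ corankSet G := by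
      refine ⟨(f.comp (IsFreeGroup.toFreeGroup H).toMonoidHom).comp ψ, ?_⟩
      exact (hf.comp (IsFreeGroup.toFreeGroup H).surjective).comp hψ
    exact absurd (hc this) (by omega)

lemma sSup_corank_free (n : ℕ) : sSup (corankSet (FreeGroup (Fin n))) = n := by
  have hmem : n ∈ corankSet (FreeGroup (Fin n)) := ⟨MonoidHom.id _, surjective_id⟩
  have hub : ∀ m ∈ corankSet (FreeGroup (Fin n)), m ≤ n := by
    rintro m ⟨f, hf⟩
    exact nat_le_of_freeGroup_surjective f hf
  exact le_antisymm (csSup_le ⟨n, hmem⟩ hub) (le_csSup ⟨n, hub⟩ hmem)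

/-- If `G₁` and `G₂` have finite coranks, then the corank of the free product `G₁ * G₂`
equals `CR(G₁) + CR(G₂)`.  In particular the corank of a free group of rank `n` is `n`. -/
theorem stmt14 (G₁ G₂ : Type*) [Group G₁] [Group G₂]
    (h₁ : BddAbove (corankSet G₁)) (h₂ : BddAbove (corankSet G₂)) :
    sSup (corankSet (Monoid.Coprod G₁ G₂)) = sSup (corankSet G₁) + sSup (corankSet G₂) ∧
    ∀ n : ℕ, sSup (corankSet (FreeGroup (Fin n))) = n := by
  classical
  refine ⟨?_, sSup_corank_free⟩
  set a := sSup (corankSet G₁) with hadef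
  set b := sSup (corankSet G₂) with hbdef
  -- upper bound: every element of the corank set of the coproduct is at most a + b
  have hub : ∀ n ∈ corankSet (Monoid.Coprod G₁ G₂), n ≤ a + b := by
    rintro n ⟨φ, hφ⟩
    set H₁ : Subgroup (FreeGroup (Fin n)) := (φ.comp Monoid.Coprod.inl).range with hH₁
    set H₂ : Subgroup (FreeGroup (Fin n)) := (φ.comp Monoid.Coprod.inr).range with hH₂
    have hsup : H₁ ⊔ H₂ = ⊤ := by
      have h0 : (Monoid.Coprod.inl : G₁ →* Monoid.Coprod G₁ G₂).range ⊔
          (Monoid.Coprod.inr : G₂ →* Monoid.Coprod G₁ G₂).range = ⊤ :=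
        Monoid.Coprod.range_inl_sup_range_inr
      have := congrArg (Subgroup.map φ) h0
      rwa [Subgroup.map_sup, MonoidHom.map_range, MonoidHom.map_range,
        Subgroup.map_top_of_surjective φ hφ] at this
    obtain ⟨r₁, hr₁, ⟨e₁⟩⟩ := fin_rank_of_bdd h₁ (φ.comp Monoid.Coprod.inl).rangeRestrict
      (φ.comp Monoid.Coprod.inl).rangeRestrict_surjective
    obtain ⟨r₂, hr₂, ⟨e₂⟩⟩ := fin_rank_of_bdd h₂ (φ.comp Monoid.Coprod.inr).rangeRestrict
      (φ.comp Monoid.Coprod.inr).rangeRestrict_surjective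
    -- generators of H₁ and H₂
    set g₁ : Fin r₁ → H₁ := fun i => e₁.symm (FreeGroup.of i) with hg₁
    set g₂ : Fin r₂ → H₂ := fun i => e₂.symm (FreeGroup.of i) with hg₂
    have hcl₁ : Subgroup.closure (Set.range g₁) = ⊤ := by
      have : Set.range g₁ = ⇑e₁.symm '' Set.range (FreeGroup.of) := by
        rw [← Set.range_comp]; rfl
      rw [this, ← MulEquiv.coe_toMonoidHom, ← MonoidHom.map_closure,
        FreeGroup.closure_range_of, Subgroup.map_top_of_surjective _ e₁.symm.surjective]
    have hcl₂ : Subgroup.closure (Set.range g₂) = ⊤ := by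
      have : Set.range g₂ = ⇑e₂.symm '' Set.range (FreeGroup.of) := by
        rw [← Set.range_comp]; rfl
      rw [this, ← MulEquiv.coe_toMonoidHom, ← MonoidHom.map_closure,
        FreeGroup.closure_range_of, Subgroup.map_top_of_surjective _ e₂.symm.surjective]
    set u : Fin (r₁ + r₂) → FreeGroup (Fin n) :=
      Fin.addCases (fun i => (g₁ i : FreeGroup (Fin n))) (fun i => (g₂ i : FreeGroup (Fin n)))
      with hu
    have hHle : ∀ (H : Subgroup (FreeGroup (Fin n))) (r : ℕ) (g : Fin r → H),
        Subgroup.closure (Set.range g) = ⊤ →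
        (∀ i, (g i : FreeGroup (Fin n)) ∈ Set.range u) →
        H ≤ Subgroup.closure (Set.range u) := by
      intro H r g hcl hmem
      have hmap : H = Subgroup.map H.subtype ⊤ := by
        rw [← MonoidHom.range_eq_map, Subgroup.range_subtype]
      rw [hmap, ← hcl, MonoidHom.map_closure, Subgroup.closure_le]
      rintro _ ⟨_, ⟨i, rfl⟩, rfl⟩
      exact Subgroup.subset_closure (hmem i)
    have hcltop : Subgroup.closure (Set.range u) = ⊤ := by
      rw [eq_top_iff, ← hsup, sup_le_iff]
      constructor
      · refine hHle H₁ r₁ g₁ hcl₁ (fun i => ⟨Fin.castAdd r₂ i, ?_⟩)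
        simp [hu]
      · refine hHle H₂ r₂ g₂ hcl₂ (fun i => ⟨Fin.natAdd r₁ i, ?_⟩)
        simp [hu]
    have := nat_le_of_freeGroup_surjective (FreeGroup.lift u)
      (lift_surjective_of_closure u hcltop)
    omega
  -- lower bound: a + b is attained
  have ha : a ∈ corankSet G₁ := Nat.sSup_mem ⟨0, zero_mem_corankSet G₁⟩ h₁
  have hb : b ∈ corankSet G₂ := Nat.sSup_mem ⟨0, zero_mem_corankSet G₂⟩ h₂
  obtain ⟨f₁, hf₁⟩ := ha
  obtain ⟨f₂, hf₂⟩ := hb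
  have hmem : a + b ∈ corankSet (Monoid.Coprod G₁ G₂) := by
    set j₁ : FreeGroup (Fin a) →* FreeGroup (Fin (a + b)) :=
      FreeGroup.map (Fin.castAdd b) with hj₁
    set j₂ : FreeGroup (Fin b) →* FreeGroup (Fin (a + b)) :=
      FreeGroup.map (Fin.natAdd a) with hj₂
    refine ⟨Monoid.Coprod.lift (j₁.comp f₁) (j₂.comp f₂), ?_⟩
    refine surjective_of_closure_range_le _ (Set.range FreeGroup.of)
      (FreeGroup.closure_range_of _) ?_
    rintro _ ⟨k, rfl⟩
    refine Fin.addCases (fun i => ?_) (fun i => ?_) k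
    · obtain ⟨x, hx⟩ := hf₁ (FreeGroup.of i)
      refine ⟨Monoid.Coprod.inl x, ?_⟩
      simp [Monoid.Coprod.lift_apply_inl, hx, hj₁]
    · obtain ⟨x, hx⟩ := hf₂ (FreeGroup.of i)
      refine ⟨Monoid.Coprod.inr x, ?_⟩
      simp [Monoid.Coprod.lift_apply_inr, hx, hj₂]
  exact le_antisymm (csSup_le ⟨a + b, hmem⟩ hub) (le_csSup ⟨a + b, hub⟩ hmem)
end
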